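/- Let f : H → ℝ be convex and differentiable, attaining its minimum value f* at some point x* ∈ H. Let α0 > 0, t0 > 0, ξ1 > 0 with ξ1 ≠ 1/3, let ν2 ≥ 6 + 1/ξ1, and set ν1 = ((1 + ξ1)/ξ1)(ν2 − 2) − (1 + ξ1)/ξ1². Let x : [t0,∞) → H be three times differentiable and satisfy x'''(t) + (ν2/t)x''(t) + (ν1/t²)x'(t) = −α0 ∇f(x(t) + ξ1 t x'(t)) for all t ≥ t0. Then there exists a constant C > 0 such that f(x(t) + ξ1 t x'(t)) − f* ≤ C/t³ for all t ≥ t0, and there exist constants M1, M2 > 0 such that f(x(t)) − f* ≤ M1/t³ + M2/t^{1/ξ1} for all t ≥ t0. -/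

import Mathlib

set_option maxHeartbeats 1000000

open InnerProductSpace RealInnerProductSpace

theorem my_grad_ineq {H : Type*} [NormedAddCommGroup H] [InnerProductSpace ℝ H] [CompleteSpace H]
    (f : H → ℝ) (hconv : ConvexOn ℝ Set.univ f) (hdiff : Differentiable ℝ f)
    (w y : H) : f w + ⟪gradient f w, y - w⟫_ℝ ≤ f y := by
  set φ : ℝ → ℝ := fun s => f (w + s • (y - w)) with hφ
  have hline : ∀ s : ℝ, HasDerivAt (fun s : ℝ => w + s • (y - w)) (y - w) s := by
    intro s
    simpa using ((hasDerivAt_id s).smul_const (y - w)).const_add w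
  have hφconv : ConvexOn ℝ Set.univ φ := by
    have := hconv.comp_affineMap (AffineMap.lineMap w y : ℝ →ᵃ[ℝ] H)
    have he : ∀ s : ℝ, (AffineMap.lineMap w y : ℝ →ᵃ[ℝ] H) s = w + s • (y - w) := by
      intro s; simp [AffineMap.lineMap_apply]; module
    have h2 : ConvexOn ℝ Set.univ (f ∘ (AffineMap.lineMap w y : ℝ →ᵃ[ℝ] H)) :=
      this.subset (by simp) convex_univ
    exact h2.congr (fun s _ => by simp [Function.comp, he, hφ])
  have hfd : HasFDerivAt f (toDual ℝ H (gradient f w)) w :=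
    (hdiff w).hasGradientAt.hasFDerivAt
  have hφd : HasDerivAt φ ⟪gradient f w, y - w⟫_ℝ 0 := by
    have hfd0 : HasFDerivAt f (toDual ℝ H (gradient f w)) (w + (0:ℝ) • (y - w)) := by
      simpa using hfd
    have := hfd0.comp_hasDerivAt (0:ℝ) (hline 0)
    simpa [hφ, Function.comp_def] using this
  have := hφconv.le_slope_of_hasDerivAt (Set.mem_univ (0:ℝ)) (Set.mem_univ (1:ℝ)) one_pos hφd
  have hs : slope φ 0 1 = f y - f w := by
    simp [slope_def_field, hφ]
  rw [hs] at this
  linarith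

theorem stmt15
    {H : Type*} [NormedAddCommGroup H] [InnerProductSpace ℝ H] [CompleteSpace H]
    (f : H → ℝ) (hconv : ConvexOn ℝ Set.univ f) (hdiff : Differentiable ℝ f)
    (xs : H) (hmin : ∀ z : H, f xs ≤ f z)
    (α0 t0 ξ1 ν1 ν2 : ℝ) (hα0 : 0 < α0) (ht0 : 0 < t0)
    (hξ1 : 0 < ξ1) (hξ1' : ξ1 ≠ 1 / 3)
    (hν2 : ν2 ≥ 6 + 1 / ξ1)
    (hν1 : ν1 = (1 + ξ1) / ξ1 * (ν2 - 2) - (1 + ξ1) / ξ1 ^ 2)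
    (x : ℝ → H)
    (hx1 : ∀ t, t0 ≤ t → DifferentiableAt ℝ x t)
    (hx2 : ∀ t, t0 ≤ t → DifferentiableAt ℝ (deriv x) t)
    (hx3 : ∀ t, t0 ≤ t → DifferentiableAt ℝ (deriv (deriv x)) t)
    (hode : ∀ t, t0 ≤ t →
      deriv (deriv (deriv x)) t + (ν2 / t) • deriv (deriv x) t +
        (ν1 / t ^ 2) • deriv x t =
      -(α0 • gradient f (x t + (ξ1 * t) • deriv x t))) :
    (∃ C : ℝ, 0 < C ∧ ∀ t, t0 ≤ t →
      f (x t + (ξ1 * t) • deriv x t) - f xs ≤ C / t ^ 3) ∧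
    (∃ M1 M2 : ℝ, 0 < M1 ∧ 0 < M2 ∧ ∀ t, t0 ≤ t →
      f (x t) - f xs ≤ M1 / t ^ 3 + M2 / t ^ (1 / ξ1)) := by
  have hξ0 : ξ1 ≠ 0 := ne_of_gt hξ1
  have htpos : ∀ t : ℝ, t0 ≤ t → 0 < t := fun t ht => lt_of_lt_of_le ht0 ht
  set c : ℝ := α0 * ξ1 with hc_def
  have hc : 0 < c := mul_pos hα0 hξ1
  set lam : ℝ := ν2 - 3 - 1/ξ1 with hlam_def
  have hlam3 : 3 ≤ lam := by
    have : 6 + 1/ξ1 ≤ ν2 := hν2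
    simp only [hlam_def]; linarith
  set u : ℝ → H := fun t => x t + (ξ1 * t) • deriv x t with hu_def
  set F : ℝ → H := fun t => (1 + ξ1) • deriv x t + (ξ1 * t) • deriv (deriv x) t with hF_def
  set G : ℝ → H := fun t => (1 + 2*ξ1) • deriv (deriv x) t + (ξ1 * t) • deriv (deriv (deriv x)) t
    with hG_def
  have hid : ∀ t : ℝ, HasDerivAt (fun s : ℝ => ξ1 * s) ξ1 t := by
    intro t; simpa using (hasDerivAt_id t).const_mul ξ1
  have hu : ∀ t, t0 ≤ t → HasDerivAt u (F t) t := by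
    intro t ht
    have := (hx1 t ht).hasDerivAt.add ((hid t).smul (hx2 t ht).hasDerivAt)
    convert this using 1
    · rfl
    simp only [hF_def]; module
  have hF : ∀ t, t0 ≤ t → HasDerivAt F (G t) t := by
    intro t ht
    have := ((hx2 t ht).hasDerivAt.const_smul (1 + ξ1)).add
      ((hid t).smul (hx3 t ht).hasDerivAt)
    convert this using 1
    · rfl
    simp only [hG_def]; module
  -- the key transformed ODE identity
  have key : ∀ t, t0 ≤ t → (lam + 1) • F t + t • G t
      = -((c * t^2) • gradient f (u t)) := by
    intro t ht
    have htne : t ≠ 0 := ne_of_gt (htpos t ht)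
    have h := hode t ht
    have hgr : gradient f (x t + (ξ1 * t) • deriv x t) = gradient f (u t) := rfl
    rw [hgr] at h
    simp only [hF_def, hG_def, hlam_def, hc_def]
    subst hν1
    linear_combination (norm := match_scalars <;> field_simp <;> ring)
      (ξ1 * t^2) • h
  set v : ℝ → H := fun t => lam • (u t - xs) + t • F t with hv_def
  have hvd : ∀ t, t0 ≤ t → HasDerivAt v (-((c * t^2) • gradient f (u t))) t := by
    intro t ht
    have := (((hu t ht).sub_const xs).const_smul lam).add ((hasDerivAt_id t).smul (hF t ht))
    rw [← key t ht]
    convert this using 1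
    · rfl
    simp only [id_eq]
    module
  have hfu : ∀ t, t0 ≤ t → HasDerivAt (fun s => f (u s)) ⟪gradient f (u t), F t⟫_ℝ t := by
    intro t ht
    have hfd : HasFDerivAt f (toDual ℝ H (gradient f (u t))) (u t) :=
      (hdiff (u t)).hasGradientAt.hasFDerivAt
    have := hfd.comp_hasDerivAt t (hu t ht)
    simpa [Function.comp_def] using this
  set E : ℝ → ℝ := fun t => c * t^3 * (f (u t) - f xs) + (1/2) * ⟪v t, v t⟫_ℝ with hE_def
  set D : ℝ → ℝ := fun t => 3*c*t^2*(f (u t) - f xs) - c*lam*t^2*⟪u t - xs, gradient f (u t)⟫_ℝ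
    with hD_def
  have hE : ∀ t, t0 ≤ t → HasDerivAt E (D t) t := by
    intro t ht
    have h1 : HasDerivAt (fun s : ℝ => c * s^3) (c * (3 * t^2)) t := by
      simpa using (hasDerivAt_pow 3 t).const_mul c
    have h2 := h1.mul ((hfu t ht).sub_const (f xs))
    have h3 := ((hvd t ht).inner ℝ (hvd t ht)).const_mul (1/2 : ℝ)
    have h4 := h2.add h3
    convert h4 using 1
    · rfl
    · rfl
    · rfl
    simp only [hD_def, hv_def, inner_neg_left, inner_neg_right, inner_add_left, inner_add_right,
      real_inner_smul_left, real_inner_smul_right]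
    rw [real_inner_comm (F t) (gradient f (u t)), real_inner_comm (u t - xs) (gradient f (u t))]
    ring
  have hDle : ∀ t, t0 ≤ t → D t ≤ 0 := by
    intro t ht
    have hgi := my_grad_ineq f hconv hdiff (u t) xs
    have hip : f (u t) - f xs ≤ ⟪u t - xs, gradient f (u t)⟫_ℝ := by
      have : ⟪gradient f (u t), xs - u t⟫_ℝ = - ⟪u t - xs, gradient f (u t)⟫_ℝ := by
        rw [real_inner_comm]; simp [inner_sub_left]
      rw [this] at hgi; linarith
    have hΔ : 0 ≤ f (u t) - f xs := sub_nonneg.2 (hmin (u t))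
    have hip0 : 0 ≤ ⟪u t - xs, gradient f (u t)⟫_ℝ := le_trans hΔ hip
    have h3 : 3 * (f (u t) - f xs) ≤ lam * ⟪u t - xs, gradient f (u t)⟫_ℝ := by nlinarith
    have ht2 : 0 ≤ c * t^2 := mul_nonneg hc.le (sq_nonneg t)
    simp only [hD_def]
    nlinarith [mul_le_mul_of_nonneg_left h3 ht2]
  have hanti : AntitoneOn E (Set.Ici t0) := by
    apply antitoneOn_of_deriv_nonpos (convex_Ici t0)
    · exact fun t ht => (hE t ht).differentiableAt.continuousAt.continuousWithinAt
    · intro t ht; rw [interior_Ici] at ht; exact (hE t ht.le).differentiableAt.differentiableWithinAt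
    · intro t ht; rw [interior_Ici] at ht; rw [(hE t ht.le).deriv]; exact hDle t ht.le
  have hE0 : 0 ≤ E t0 := by
    have hΔ : 0 ≤ f (u t0) - f xs := sub_nonneg.2 (hmin (u t0))
    have h0 : 0 ≤ c * t0^3 := by positivity
    simp only [hE_def]
    nlinarith [real_inner_self_nonneg (x := v t0)]
  set C : ℝ := (E t0 + 1) / c with hC_def
  have hCpos : 0 < C := by positivity
  have part1 : ∀ t, t0 ≤ t → f (u t) - f xs ≤ C / t ^ 3 := by
    intro t ht
    have h1 : E t ≤ E t0 := hanti (Set.self_mem_Ici) ht ht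
    have h2 : c * t^3 * (f (u t) - f xs) ≤ E t := by
      simp only [hE_def]
      nlinarith [real_inner_self_nonneg (x := v t)]
    have htp := htpos t ht
    rw [le_div_iff₀ (by positivity)]
    have hcC : c * C = E t0 + 1 := by
      simp only [hC_def]; field_simp
    nlinarith
  constructor
  · exact ⟨C, hCpos, fun t ht => part1 t ht⟩
  -- Part 2
  have hgx : ∀ t, t0 ≤ t → HasDerivAt (fun s => f (x s)) ⟪gradient f (x t), deriv x t⟫_ℝ t := by
    intro t ht
    have hfd : HasFDerivAt f (toDual ℝ H (gradient f (x t))) (x t) :=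
      (hdiff (x t)).hasGradientAt.hasFDerivAt
    simpa [Function.comp_def] using hfd.comp_hasDerivAt t (hx1 t ht).hasDerivAt
  have hPineq : ∀ t, t0 ≤ t →
      (f (x t) - f xs) + ξ1 * t * ⟪gradient f (x t), deriv x t⟫_ℝ ≤ C / t^3 := by
    intro t ht
    have hgi := my_grad_ineq f hconv hdiff (x t) (u t)
    have he : u t - x t = (ξ1 * t) • deriv x t := by
      simp only [hu_def]; abel
    rw [he, real_inner_smul_right] at hgi
    have h1 := part1 t ht
    linarith
  set a : ℝ := 1/ξ1 with ha_def
  have ha : 0 < a := by positivity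
  have haξ : a * ξ1 = 1 := by rw [ha_def]; field_simp
  have h13 : 1 - 3*ξ1 ≠ 0 := by
    intro hcon; apply hξ1'; linarith
  set K : ℝ := C / (1 - 3*ξ1) with hK_def
  set ψ : ℝ → ℝ := fun t => t ^ a * (f (x t) - f xs) - K * t ^ (a - 3) with hψ_def
  have hKa : K * (a - 3) = a * C := by
    simp only [hK_def, ha_def]; field_simp
  set W : ℝ → ℝ := fun t => a * t^(a-1) * (f (x t) - f xs)
      + t^a * ⟪gradient f (x t), deriv x t⟫_ℝ - K * ((a-3) * t^(a-3-1)) with hW_def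
  have hψd : ∀ t, t0 ≤ t → HasDerivAt ψ (W t) t := by
    intro t ht
    have htne : t ≠ 0 := ne_of_gt (htpos t ht)
    have h1 : HasDerivAt (fun s : ℝ => s ^ a) (a * t^(a-1)) t :=
      Real.hasDerivAt_rpow_const (Or.inl htne)
    have h2 : HasDerivAt (fun s : ℝ => s ^ (a-3)) ((a-3) * t^(a-3-1)) t :=
      Real.hasDerivAt_rpow_const (Or.inl htne)
    have h3 := h1.mul ((hgx t ht).sub_const (f xs))
    have := h3.sub (h2.const_mul K)
    convert this using 1
    all_goals rfl
  have hWle : ∀ t, t0 ≤ t → W t ≤ 0 := by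
    intro t ht
    have htp := htpos t ht
    have htne : t ≠ 0 := ne_of_gt htp
    have hb : 0 < t ^ (a-1) := Real.rpow_pos_of_pos htp _
    have hb3 : (0:ℝ) < t^3 := by positivity
    have e1 : t ^ a = t ^ (a-1) * t := by
      rw [← Real.rpow_add_one htne]
      congr 1 <;> ring
    have e2 : t ^ (a-3-1) = t ^ (a-1) / t^3 := by
      rw [eq_div_iff hb3.ne', ← Real.rpow_natCast t 3, ← Real.rpow_add htp]
      congr 1 <;> ring
    have hP := hPineq t ht
    have hexp : a * ((f (x t) - f xs) + ξ1 * t * ⟪gradient f (x t), deriv x t⟫_ℝ)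
        = a * (f (x t) - f xs) + t * ⟪gradient f (x t), deriv x t⟫_ℝ := by
      linear_combination (t * ⟪gradient f (x t), deriv x t⟫_ℝ) * haξ
    have hmul := mul_le_mul_of_nonneg_left hP ha.le
    rw [hexp] at hmul
    have hval : W t = t^(a-1) * (a * (f (x t) - f xs) + t * ⟪gradient f (x t), deriv x t⟫_ℝ)
        - (K * (a-3)) * (t^(a-1) / t^3) := by
      simp only [hW_def]; rw [e1, e2]; ring
    rw [hval, hKa]
    have hstep := mul_le_mul_of_nonneg_left hmul hb.le
    have heq : a * C * (t^(a-1) / t^3) = t^(a-1) * (a * (C/t^3)) := by ring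
    linarith
  have hanti2 : AntitoneOn ψ (Set.Ici t0) := by
    apply antitoneOn_of_deriv_nonpos (convex_Ici t0)
    · exact fun t ht => (hψd t ht).differentiableAt.continuousAt.continuousWithinAt
    · intro t ht; rw [interior_Ici] at ht
      exact (hψd t ht.le).differentiableAt.differentiableWithinAt
    · intro t ht; rw [interior_Ici] at ht; rw [(hψd t ht.le).deriv]; exact hWle t ht.le
  refine ⟨|K| + 1, |ψ t0| + 1, by positivity, by positivity, ?_⟩
  intro t ht
  have htp := htpos t ht
  have hA : 0 < t ^ a := Real.rpow_pos_of_pos htp a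
  have hB : (0:ℝ) < t^3 := by positivity
  have h1 : ψ t ≤ ψ t0 := hanti2 Set.self_mem_Ici ht ht
  have e3 : t ^ (a - 3) = t ^ a / t^3 := by
    rw [eq_div_iff hB.ne', ← Real.rpow_natCast t 3, ← Real.rpow_add htp]
    congr 1 <;> ring
  have h1' : t^a * (f (x t) - f xs) ≤ K * (t^a/t^3) + ψ t0 := by
    have h1b : t ^ a * (f (x t) - f xs) - K * t ^ (a - 3) ≤ ψ t0 := h1
    rw [e3] at h1b
    linarith
  rw [div_add_div _ _ hB.ne' hA.ne', le_div_iff₀ (by positivity)]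
  have h2 : t^a * (f (x t) - f xs) * t^3 ≤ K * t^a + ψ t0 * t^3 := by
    have h3 := mul_le_mul_of_nonneg_right h1' hB.le
    have h4 : (K * (t^a/t^3) + ψ t0) * t^3 = K*t^a + ψ t0*t^3 := by
      field_simp
    rw [h4] at h3
    exact h3
  have h5 : K * t^a ≤ (|K|+1) * t^a := by
    apply mul_le_mul_of_nonneg_right _ hA.le; linarith [le_abs_self K]
  have h6 : ψ t0 * t^3 ≤ (|ψ t0|+1) * t^3 := by
    apply mul_le_mul_of_nonneg_right _ hB.le; linarith [le_abs_self (ψ t0)]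
  have h7 : (f (x t) - f xs) * (t^3 * t^a) = t^a * (f (x t) - f xs) * t^3 := by ring
  linarith
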